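/- Let Q be a finite quiver without sources. The semisimple left A-module kQ₀ = A/rad A has an injective resolution M• with M^l = ⊕_{i ∈ Q₀} I_i^{(Λ^{l,0}_i)} for l ≥ 0 and M^l = 0 for l < 0, where the differential satisfies d^l(e_i^♯ ζ_{(e_i,q)}) = 0 and d^l(α^♯ ζ_{(e_i,q)}) = e_{s(α)}^♯ ζ_{(e_{s(α)}, qα)}. In particular, H⁰(M•) ≅ kQ₀ and H^l(M•) = 0 for l ≠ 0. -/

import Mathlib

noncomputable section

/-- A finite quiver: finite sets of vertices and arrows, with source and target maps. -/
structure FQ where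
  V : Type
  E : Type
  [fV : Fintype V]
  [fE : Fintype E]
  [dV : DecidableEq V]
  [dE : DecidableEq E]
  s : E → V
  t : E → V

attribute [instance] FQ.fV FQ.fE FQ.dV FQ.dE

/-- `Q` has no sources: every vertex admits an arrow terminating at it. -/
def FQ.NoSources (Q : FQ) : Prop := ∀ i : Q.V, ∃ e : Q.E, Q.t e = i

/-- The opposite quiver. -/
def FQ.op (Q : FQ) : FQ := { V := Q.V, E := Q.E, s := Q.t, t := Q.s }

/-- Paths in the quiver `Q` from a vertex to a vertex; `cons p e he` is the path
`e ∘ p` obtained by composing an arrow `e` after the path `p` (paths are written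
from right to left). -/
inductive QP (Q : FQ) : Q.V → Q.V → Type
  | nil (i : Q.V) : QP Q i i
  | cons {i j : Q.V} (p : QP Q i j) (e : Q.E) (he : Q.s e = j) : QP Q i (Q.t e)

namespace QP

variable {Q : FQ}

/-- The length of a path. -/
def length : ∀ {i j : Q.V}, QP Q i j → ℕ
  | _, _, .nil _ => 0
  | _, _, .cons p _ _ => length p + 1

/-- The first (rightmost) arrow of a path, if any. -/
def firstArrow : ∀ {i j : Q.V}, QP Q i j → Option Q.E
  | _, _, .nil _ => none
  | _, _, .cons p e _ => some ((firstArrow p).getD e)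

/-- The last (leftmost) arrow of a path, if any. -/
def lastArrow : ∀ {i j : Q.V}, QP Q i j → Option Q.E
  | _, _, .nil _ => none
  | _, _, .cons _ e _ => some e

/-- Transport of a path along an equality of its starting vertices. -/
def castSrc {i i' j : Q.V} (h : i = i') (p : QP Q i j) : QP Q i' j := h ▸ p

/-- Extend a path at its starting vertex by an arrow (`p ↦ p ∘ e`). -/
def preCons (e : Q.E) : ∀ {j : Q.V}, QP Q (Q.t e) j → QP Q (Q.s e) j
  | _, .nil _ => .cons (.nil (Q.s e)) e rfl
  | _, .cons p f hf => .cons (preCons e p) f hf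

lemma length_castSrc {i i' j : Q.V} (h : i = i') (p : QP Q i j) :
    (castSrc h p).length = p.length := by subst h; rfl

lemma length_preCons (e : Q.E) : ∀ {j : Q.V} (p : QP Q (Q.t e) j),
    (preCons e p).length = p.length + 1
  | _, .nil _ => by simp [preCons, length]
  | _, .cons p f hf => by
      show (QP.cons (preCons e p) f hf).length = _
      simp [length, length_preCons e p]

end QP

/-- With respect to a choice `asc` of an *associated* arrow terminating at each
non-source vertex, `IsAssoc Q asc a` says that the arrow `a` is the associated arrow
terminating at its target. -/
def IsAssoc (Q : FQ) (asc : ∀ i : Q.V, (∃ e, Q.t e = i) → Q.E) (a : Q.E) : Prop :=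
  asc (Q.t a) ⟨a, rfl⟩ = a

/-- `(p, q)` is an *associated pair*: the paths `p` and `q` start at the same vertex,
and either one of them is trivial, or their first arrows differ, or their common first
arrow is not associated. -/
def AssocPair (Q : FQ) (asc : ∀ i : Q.V, (∃ e, Q.t e = i) → Q.E)
    {i j j' : Q.V} (p : QP Q i j) (q : QP Q i j') : Prop :=
  ∀ a : Q.E, p.firstArrow = some a → q.firstArrow = some a → ¬ IsAssoc Q asc a

lemma assocPair_nil_left {Q : FQ} {asc : ∀ i : Q.V, (∃ e, Q.t e = i) → Q.E}
    {i j : Q.V} (q : QP Q i j) : AssocPair Q asc (QP.nil i) q := by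
  intro a h
  simp [QP.firstArrow] at h

lemma assocPair_nil_right {Q : FQ} {asc : ∀ i : Q.V, (∃ e, Q.t e = i) → Q.E}
    {i j : Q.V} (p : QP Q i j) : AssocPair Q asc p (QP.nil i) := by
  intro a _ h
  simp [QP.firstArrow] at h

/-- The index set `Λ^l_i` (for `i = x.i`): associated pairs `(p, q)` with
`t(p) = i` and `l(q) - l(p) = l`. -/
structure Lam (Q : FQ) (asc : ∀ i : Q.V, (∃ e, Q.t e = i) → Q.E) (l : ℤ) where
  a : Q.V              -- the common starting vertex of `p` and `q`
  i : Q.V              -- the terminating vertex of `p`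
  b : Q.V              -- the terminating vertex of `q`
  p : QP Q a i
  q : QP Q a b
  ok : AssocPair Q asc p q
  deg : (q.length : ℤ) - (p.length : ℤ) = l

instance {Q : FQ} {asc : ∀ i : Q.V, (∃ e, Q.t e = i) → Q.E} {l : ℤ} :
    DecidableEq (Lam Q asc l) := Classical.decEq _
/-- Generators of the path algebra `kQ`. -/
inductive AGen (Q : FQ)
  | vtx (i : Q.V)
  | ar (e : Q.E)

/-- The defining relations of the radical square zero algebra `A = kQ/J²`:
the trivial paths are orthogonal idempotents summing to the unit, arrows are unital
with respect to the trivial paths at their endpoints, and any product of two arrows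
vanishes. -/
inductive ARel (k : Type) [Field k] (Q : FQ) :
    FreeAlgebra k (AGen Q) → FreeAlgebra k (AGen Q) → Prop
  | vtx_mul (i j : Q.V) :
      ARel k Q (FreeAlgebra.ι k (AGen.vtx i) * FreeAlgebra.ι k (AGen.vtx j))
        (if i = j then FreeAlgebra.ι k (AGen.vtx i) else 0)
  | sum_vtx : ARel k Q (∑ i : Q.V, FreeAlgebra.ι k (AGen.vtx i)) 1
  | vtx_ar (e : Q.E) :
      ARel k Q (FreeAlgebra.ι k (AGen.vtx (Q.t e)) * FreeAlgebra.ι k (AGen.ar e))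
        (FreeAlgebra.ι k (AGen.ar e))
  | ar_vtx (e : Q.E) :
      ARel k Q (FreeAlgebra.ι k (AGen.ar e) * FreeAlgebra.ι k (AGen.vtx (Q.s e)))
        (FreeAlgebra.ι k (AGen.ar e))
  | rad_sq (e f : Q.E) :
      ARel k Q (FreeAlgebra.ι k (AGen.ar e) * FreeAlgebra.ι k (AGen.ar f)) 0

/-- The radical square zero algebra `A = kQ/J²` of the finite quiver `Q`. -/
abbrev AlgA (k : Type) [Field k] (Q : FQ) := RingQuot (ARel k Q)

/-- The image `e_i` in `A` of the trivial path at the vertex `i`. -/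
def vtxA (k : Type) [Field k] (Q : FQ) (i : Q.V) : AlgA k Q :=
  RingQuot.mkAlgHom k (ARel k Q) (FreeAlgebra.ι k (AGen.vtx i))

/-- The image `α` in `A` of an arrow `α`. -/
def arA (k : Type) [Field k] (Q : FQ) (e : Q.E) : AlgA k Q :=
  RingQuot.mkAlgHom k (ARel k Q) (FreeAlgebra.ι k (AGen.ar e))

lemma arA_mul_vtxA (k : Type) [Field k] (Q : FQ) (e : Q.E) :
    arA k Q e * vtxA k Q (Q.s e) = arA k Q e := by
  have h := RingQuot.mkAlgHom_rel k (ARel.ar_vtx (k := k) (Q := Q) e)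
  simpa [vtxA, arA, map_mul] using h

/-- The indecomposable projective left `A`-module `P_i = A e_i`. -/
def Pmod (k : Type) [Field k] (Q : FQ) (i : Q.V) : Submodule (AlgA k Q) (AlgA k Q) :=
  Submodule.span (AlgA k Q) {vtxA k Q i}

lemma vtxA_mem (k : Type) [Field k] (Q : FQ) (i : Q.V) : vtxA k Q i ∈ Pmod k Q i :=
  Submodule.mem_span_singleton_self _

lemma arA_mem (k : Type) [Field k] (Q : FQ) (e : Q.E) {i : Q.V} (he : Q.s e = i) :
    arA k Q e ∈ Pmod k Q i := by
  subst he
  rw [← arA_mul_vtxA k Q e]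
  simpa [smul_eq_mul] using
    Submodule.smul_mem (Pmod k Q (Q.s e)) (arA k Q e) (vtxA_mem k Q (Q.s e))

/-- The `l`-th component `P^l = ⊕_{i ∈ Q₀} P_i^{(Λ^l_i)}` of the projective Leavitt
complex. -/
abbrev PL (k : Type) [Field k] (Q : FQ) (asc : ∀ i : Q.V, (∃ e, Q.t e = i) → Q.E)
    (l : ℤ) : Type :=
  Π₀ x : Lam Q asc l, ↥(Pmod k Q x.i)

instance PL.instAddCommGroup (k : Type) [Field k] (Q : FQ)
    (asc : ∀ i : Q.V, (∃ e, Q.t e = i) → Q.E) (l : ℤ) :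
    AddCommGroup (PL k Q asc l) :=
  @DFinsupp.addCommGroup (Lam Q asc l) (fun x => ↥(Pmod k Q x.i)) (fun _ => inferInstance)
/-- The index set `Λ^{l,0}_i` (ranging over `i`): associated pairs `(e_i, q)` with a
trivial first component, `s(q) = i` and `l(q) = l`. -/
structure Lam0 (Q : FQ) (l : ℕ) where
  i : Q.V
  b : Q.V
  q : QP Q i b
  len : q.length = l

/-- The underlying vector space of `M^l = ⊕_{i ∈ Q₀} I_i^{(Λ^{l,0}_i)}`, where the
injective `A`-module `I_i = D(e_i A)` has the `k`-basis
`{e_i^♯} ∪ {α^♯ | α ∈ Q₁, t(α) = i}`. -/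
abbrev Mspace (k : Type) [Field k] (Q : FQ) (l : ℕ) : Type :=
  (Σ x : Lam0 Q l, Option {e : Q.E // Q.t e = x.i}) →₀ k

/-- The basis vector `e_i^♯ ζ_{(e_i, q)}` of `M^l`. -/
def mE {k : Type} [Field k] {Q : FQ} {l : ℕ} (x : Lam0 Q l) : Mspace k Q l :=
  Finsupp.single ⟨x, none⟩ 1

/-- The basis vector `α^♯ ζ_{(e_i, q)}` of `M^l` for `t(α) = i`. -/
def mA {k : Type} [Field k] {Q : FQ} {l : ℕ} (x : Lam0 Q l) (e : Q.E)
    (he : Q.t e = x.i) : Mspace k Q l :=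
  Finsupp.single ⟨x, some ⟨e, he⟩⟩ 1


----------------------------------------------------------------
-- Auxiliary development
----------------------------------------------------------------

namespace QP
variable {Q : FQ}
/-- arrows of a path, leftmost first -/
def toList : ∀ {i j : Q.V}, QP Q i j → List Q.E
  | _, _, .nil _ => []
  | _, _, .cons p e _ => e :: toList p

lemma toList_castSrc {i i' j : Q.V} (h : i = i') (p : QP Q i j) :
    (castSrc h p).toList = p.toList := by subst h; rfl

lemma toList_preCons (e : Q.E) : ∀ {j : Q.V} (p : QP Q (Q.t e) j),
    (preCons e p).toList = p.toList ++ [e]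
  | _, .nil _ => by simp [preCons, toList]
  | _, .cons p f hf => by
      show (QP.cons (preCons e p) f hf).toList = (QP.cons p f hf).toList ++ [e]
      simp [toList, toList_preCons e p]

lemma length_toList : ∀ {i j : Q.V} (p : QP Q i j), p.toList.length = p.length
  | _, _, .nil _ => by simp [toList, length]
  | _, _, .cons p e _ => by simp [toList, length, length_toList p]

lemma toList_inj : ∀ {i j j' : Q.V} (p : QP Q i j) (q : QP Q i j'),
    p.toList = q.toList → j = j' ∧ HEq p q
  | _, _, _, .nil _, .nil _, _ => ⟨rfl, HEq.rfl⟩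
  | _, _, _, .nil _, .cons _ _ _, h => by simp [toList] at h
  | _, _, _, .cons _ _ _, .nil _, h => by simp [toList] at h
  | _, _, _, .cons p e he, .cons q f hf, h => by
      simp only [toList, List.cons.injEq] at h
      obtain ⟨rfl, h2⟩ := h
      obtain ⟨rfl, h4⟩ := toList_inj p q h2
      refine ⟨rfl, ?_⟩
      cases h4
      cases Subsingleton.elim he hf
      rfl

lemma eq_of_toList_eq {i j : Q.V} (p q : QP Q i j) (h : p.toList = q.toList) : p = q :=
  eq_of_heq (toList_inj p q h).2

lemma eq_nil_of_length_zero : ∀ {i j : Q.V} (p : QP Q i j), p.length = 0 → i = j ∧ HEq p (QP.nil i)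
  | _, _, .nil _, _ => ⟨rfl, HEq.rfl⟩
  | _, _, .cons p e he, h => by simp [length] at h

/-- strip the rightmost (first) arrow of a nonempty path -/
lemma exists_strip : ∀ {i j : Q.V} (p : QP Q i j) {n : ℕ}, p.length = n + 1 →
    ∃ (e : Q.E) (h : Q.s e = i) (q : QP Q (Q.t e) j),
      q.length = n ∧ p = castSrc h (preCons e q)
  | _, _, .nil _, n, h => by simp [length] at h
  | _, _, .cons p f hf, n, h => by
    cases n with
    | zero =>
      have h0 : p.length = 0 := by simpa [length] using h
      obtain ⟨rfl, hp⟩ := eq_nil_of_length_zero p h0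
      cases hp
      -- p = nil i, hf : Q.s f = i
      refine ⟨f, hf, .nil _, by simp [length], ?_⟩
      subst hf
      rfl
    | succ m =>
      have h0 : p.length = m + 1 := by simpa [length] using h
      obtain ⟨e, he, q, hq, rfl⟩ := exists_strip p h0
      refine ⟨e, he, .cons q f hf, by simp [length, hq], ?_⟩
      subst he
      rfl

end QP

namespace Lam0
variable {Q : FQ} {l : ℕ}


variable {Q : FQ} {l : ℕ}

lemma ext' {x y : Lam0 Q l} (hi : x.i = y.i) (hb : x.b = y.b) (hq : x.q.toList = y.q.toList) :
    x = y := by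
  obtain ⟨i, b, q, len⟩ := x
  obtain ⟨i', b', q', len'⟩ := y
  cases hi; cases hb
  cases QP.eq_of_toList_eq q q' hq
  rfl

instance : Finite (Lam0 Q l) := by
  have : Function.Injective (fun x : Lam0 Q l =>
      (x.i, (fun n : Fin l => x.q.toList[(n : ℕ)]? : Fin l → Option Q.E))) := by
    intro x y h
    simp only [Prod.mk.injEq] at h
    obtain ⟨h1, h2⟩ := h
    have hlx : x.q.toList.length = l := by rw [QP.length_toList, x.len]
    have hly : y.q.toList.length = l := by rw [QP.length_toList, y.len]
    have hql : x.q.toList = y.q.toList := by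
      apply List.ext_getElem? 
      intro n
      by_cases hn : n < l
      · exact congrFun h2 ⟨n, hn⟩
      · rw [List.getElem?_eq_none_iff.2 (by omega), List.getElem?_eq_none_iff.2 (by omega)]
    have hb : x.b = y.b := by
      obtain ⟨i, b, q, len⟩ := x
      obtain ⟨i', b', q', len'⟩ := y
      cases h1
      exact (QP.toList_inj q q' hql).1
    exact ext' h1 hb hql
  exact Finite.of_injective _ this

end Lam0


namespace QuivAlg

variable (k : Type) [Field k] (Q : FQ)

lemma vtxA_mul_vtxA (i j : Q.V) :
    vtxA k Q i * vtxA k Q j = if i = j then vtxA k Q i else 0 := by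
  have h := RingQuot.mkAlgHom_rel k (ARel.vtx_mul (k := k) (Q := Q) i j)
  simp only [map_mul] at h
  split_ifs with hij
  · subst hij; simpa [vtxA] using h
  · simpa [vtxA, hij] using h

lemma sum_vtxA : (∑ i : Q.V, vtxA k Q i) = 1 := by
  have h := RingQuot.mkAlgHom_rel k (ARel.sum_vtx (k := k) (Q := Q))
  simpa [vtxA, map_sum] using h

lemma vtxA_mul_arA (j : Q.V) (e : Q.E) :
    vtxA k Q j * arA k Q e = if Q.t e = j then arA k Q e else 0 := by
  have h := RingQuot.mkAlgHom_rel k (ARel.vtx_ar (k := k) (Q := Q) e)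
  simp only [map_mul] at h
  split_ifs with hj
  · subst hj; simpa [vtxA, arA] using h
  · have h2 : vtxA k Q j * arA k Q e = vtxA k Q j * (vtxA k Q (Q.t e) * arA k Q e) := by
      rw [show vtxA k Q (Q.t e) * arA k Q e = arA k Q e by simpa [vtxA, arA] using h]
    rw [h2, ← mul_assoc, vtxA_mul_vtxA, if_neg (fun hh => hj hh.symm), zero_mul]

lemma arA_mul_vtxA' (e : Q.E) (j : Q.V) :
    arA k Q e * vtxA k Q j = if Q.s e = j then arA k Q e else 0 := by
  have h := RingQuot.mkAlgHom_rel k (ARel.ar_vtx (k := k) (Q := Q) e)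
  simp only [map_mul] at h
  split_ifs with hj
  · subst hj; simpa [vtxA, arA] using h
  · have h2 : arA k Q e * vtxA k Q j = (arA k Q e * vtxA k Q (Q.s e)) * vtxA k Q j := by
      rw [show arA k Q e * vtxA k Q (Q.s e) = arA k Q e by simpa [vtxA, arA] using h]
    rw [h2, mul_assoc, vtxA_mul_vtxA, if_neg hj, mul_zero]

lemma arA_mul_arA (e f : Q.E) : arA k Q e * arA k Q f = 0 := by
  have h := RingQuot.mkAlgHom_rel k (ARel.rad_sq (k := k) (Q := Q) e f)
  simpa [arA, map_mul] using h

/-- the basis targets of the left regular representation -/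
def tgt : AGen Q → (Q.V ⊕ Q.E) → ((Q.V ⊕ Q.E) →₀ k)
  | .vtx j, .inl i => if i = j then Finsupp.single (Sum.inl i) 1 else 0
  | .vtx j, .inr b => if Q.t b = j then Finsupp.single (Sum.inr b) 1 else 0
  | .ar g, .inl i => if Q.s g = i then Finsupp.single (Sum.inr g) 1 else 0
  | .ar _, .inr _ => 0

def rho0 : FreeAlgebra k (AGen Q) →ₐ[k] Module.End k ((Q.V ⊕ Q.E) →₀ k) :=
  FreeAlgebra.lift k fun g => Finsupp.lsum k fun s => LinearMap.toSpanSingleton k _ (tgt k Q g s)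

lemma rho0_ι (g : AGen Q) (s : Q.V ⊕ Q.E) :
    rho0 k Q (FreeAlgebra.ι k g) (Finsupp.single s 1) = tgt k Q g s := by
  simp [rho0, Finsupp.lsum_single, LinearMap.toSpanSingleton_apply]

lemma rho0_rel : ∀ ⦃x y : FreeAlgebra k (AGen Q)⦄, ARel k Q x y → rho0 k Q x = rho0 k Q y := by
  intro x y h
  induction h with
  | vtx_mul i j =>
      apply Finsupp.lhom_ext
      intro s c
      have : (Finsupp.single s c : (Q.V ⊕ Q.E) →₀ k) = c • Finsupp.single s 1 := by
        simp [Finsupp.smul_single]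
      rw [this]
      simp only [map_smul, map_mul, Module.End.mul_apply]
      congr 1
      rcases s with i' | b
      · by_cases hj : i' = j <;> by_cases hij : i = j <;>
          simp [rho0_ι, tgt, hj, hij, apply_ite, Finsupp.single_apply] <;> aesop
      · by_cases hj : Q.t b = j <;> by_cases hij : i = j <;>
          simp [rho0_ι, tgt, hj, hij, apply_ite] <;> aesop
  | sum_vtx =>
      apply Finsupp.lhom_ext
      intro s c
      have : (Finsupp.single s c : (Q.V ⊕ Q.E) →₀ k) = c • Finsupp.single s 1 := by
        simp [Finsupp.smul_single]
      rw [this]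
      simp only [map_sum, map_smul, map_one, LinearMap.sum_apply, Module.End.one_apply]
      congr 1
      rcases s with i' | b
      · simp [rho0_ι, tgt, Finset.sum_ite_eq]
      · simp [rho0_ι, tgt, Finset.sum_ite_eq]
  | vtx_ar e =>
      apply Finsupp.lhom_ext
      intro s c
      have : (Finsupp.single s c : (Q.V ⊕ Q.E) →₀ k) = c • Finsupp.single s 1 := by
        simp [Finsupp.smul_single]
      rw [this]
      simp only [map_smul, map_mul, Module.End.mul_apply]
      congr 1
      rcases s with i' | b
      · by_cases h1 : Q.s e = i' <;> simp [rho0_ι, tgt, h1]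
      · by_cases h1 : Q.t b = Q.t e <;> simp [rho0_ι, tgt, h1]
  | ar_vtx e =>
      apply Finsupp.lhom_ext
      intro s c
      have : (Finsupp.single s c : (Q.V ⊕ Q.E) →₀ k) = c • Finsupp.single s 1 := by
        simp [Finsupp.smul_single]
      rw [this]
      simp only [map_smul, map_mul, Module.End.mul_apply]
      congr 1
      rcases s with i' | b
      · by_cases h1 : i' = Q.s e <;> simp [rho0_ι, tgt, h1] <;> aesop
      · by_cases h1 : Q.t b = Q.s e <;> simp [rho0_ι, tgt, h1]
  | rad_sq e f =>
      apply Finsupp.lhom_ext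
      intro s c
      have : (Finsupp.single s c : (Q.V ⊕ Q.E) →₀ k) = c • Finsupp.single s 1 := by
        simp [Finsupp.smul_single]
      rw [this]
      simp only [map_smul, map_mul, Module.End.mul_apply, map_zero]
      congr 1
      rcases s with i' | b
      · by_cases h1 : Q.s f = i' <;> simp [rho0_ι, tgt, h1]
      · simp [rho0_ι, tgt]

def rho : AlgA k Q →ₐ[k] Module.End k ((Q.V ⊕ Q.E) →₀ k) :=
  RingQuot.liftAlgHom k ⟨rho0 k Q, rho0_rel k Q⟩

lemma rho_mk (x : FreeAlgebra k (AGen Q)) :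
    rho k Q (RingQuot.mkAlgHom k (ARel k Q) x) = rho0 k Q x := by
  rw [rho, RingQuot.liftAlgHom_mkAlgHom_apply]

lemma rho_vtxA (j : Q.V) (s : Q.V ⊕ Q.E) :
    rho k Q (vtxA k Q j) (Finsupp.single s 1) = tgt k Q (AGen.vtx j) s := by
  rw [vtxA, rho_mk]; exact rho0_ι k Q _ s

lemma rho_arA (g : Q.E) (s : Q.V ⊕ Q.E) :
    rho k Q (arA k Q g) (Finsupp.single s 1) = tgt k Q (AGen.ar g) s := by
  rw [arA, rho_mk]; exact rho0_ι k Q _ s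


/-- coordinate map of `A` w.r.t. the basis `{e_j} ∪ {β}` -/
def coordA : AlgA k Q →ₗ[k] ((Q.V ⊕ Q.E) →₀ k) where
  toFun a := rho k Q a (∑ i : Q.V, Finsupp.single (Sum.inl i) 1)
  map_add' a b := by simp [map_add, Finset.sum_add_distrib]
  map_smul' c a := by simp [map_smul, Finset.smul_sum]

/-- the `e_j`-coordinate -/
def piA (j : Q.V) (a : AlgA k Q) : k := coordA k Q a (Sum.inl j)

/-- the `β`-coordinate -/
def tauA (b : Q.E) (a : AlgA k Q) : k := coordA k Q a (Sum.inr b)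

/-- reconstruction -/
def recA : ((Q.V ⊕ Q.E) →₀ k) →ₗ[k] AlgA k Q :=
  Finsupp.lsum k fun s => LinearMap.toSpanSingleton k _
    (Sum.elim (fun j => vtxA k Q j) (fun b => arA k Q b) s)

lemma recA_single_inl (j : Q.V) (c : k) :
    recA k Q (Finsupp.single (Sum.inl j) c) = c • vtxA k Q j := by
  simp [recA, Finsupp.lsum_single, LinearMap.toSpanSingleton_apply]

lemma recA_single_inr (b : Q.E) (c : k) :
    recA k Q (Finsupp.single (Sum.inr b) c) = c • arA k Q b := by
  simp [recA, Finsupp.lsum_single, LinearMap.toSpanSingleton_apply]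

lemma recA_rho (a : AlgA k Q) (v : (Q.V ⊕ Q.E) →₀ k) :
    recA k Q (rho k Q a v) = a * recA k Q v := by
  have key : ∀ x : FreeAlgebra k (AGen Q), ∀ v : (Q.V ⊕ Q.E) →₀ k,
      recA k Q (rho k Q (RingQuot.mkAlgHom k (ARel k Q) x) v)
        = RingQuot.mkAlgHom k (ARel k Q) x * recA k Q v := by
    intro x
    induction x using FreeAlgebra.induction with
    | grade0 c =>
        intro v
        rw [AlgHom.commutes, AlgHom.commutes]
        simp [Module.algebraMap_end_apply, Algebra.algebraMap_eq_smul_one,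
          Algebra.smul_mul_assoc]
    | grade1 g =>
        intro v
        induction v using Finsupp.induction_linear with
        | zero => simp
        | add f g hf hg => rw [map_add, map_add, map_add, mul_add, hf, hg]
        | single s c =>
            have hs : (Finsupp.single s c : (Q.V ⊕ Q.E) →₀ k) = c • Finsupp.single s 1 := by
              simp [Finsupp.smul_single]
            rw [hs, map_smul, map_smul, map_smul, mul_smul_comm]
            congr 1
            rcases g with j | b
            · rw [show RingQuot.mkAlgHom k (ARel k Q) (FreeAlgebra.ι k (AGen.vtx j))
                  = vtxA k Q j from rfl, rho_vtxA]
              rcases s with i | e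
              · by_cases h : i = j
                · simp [tgt, h, recA_single_inl, vtxA_mul_vtxA, smul_smul]
                · simp only [tgt, if_neg h, map_zero, smul_zero, recA_single_inl, one_smul,
                    vtxA_mul_vtxA, smul_eq_mul]
                  rw [if_neg (fun hh => h hh.symm)]
              · by_cases h : Q.t e = j <;>
                  simp [tgt, h, recA_single_inr, vtxA_mul_arA, smul_smul]
            · rw [show RingQuot.mkAlgHom k (ARel k Q) (FreeAlgebra.ι k (AGen.ar b))
                  = arA k Q b from rfl, rho_arA]
              rcases s with i | e
              · by_cases h : Q.s b = i <;>
                  simp [tgt, h, recA_single_inl, recA_single_inr, arA_mul_vtxA']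
              · simp [tgt, recA_single_inr, arA_mul_arA]
    | mul x y hx hy =>
        intro v
        rw [map_mul, map_mul, Module.End.mul_apply, hx, hy, mul_assoc]
    | add x y hx hy =>
        intro v
        rw [map_add, map_add, LinearMap.add_apply, map_add, add_mul, hx, hy]
  obtain ⟨x, hx⟩ := RingQuot.mkAlgHom_surjective k (ARel k Q) a
  subst hx
  exact key x v

lemma recA_coordA (a : AlgA k Q) : recA k Q (coordA k Q a) = a := by
  have h : recA k Q (∑ i : Q.V, Finsupp.single (Sum.inl i) 1) = 1 := by
    rw [map_sum]
    simp only [recA_single_inl, one_smul]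
    exact sum_vtxA k Q
  rw [coordA]
  dsimp
  rw [recA_rho, h, mul_one]

/-- the expansion of an element of `A` in the basis -/
lemma expansion (a : AlgA k Q) :
    a = (∑ j : Q.V, piA k Q j a • vtxA k Q j) + ∑ b : Q.E, tauA k Q b a • arA k Q b := by
  conv_lhs => rw [← recA_coordA k Q a]
  rw [show coordA k Q a = ∑ s : Q.V ⊕ Q.E, Finsupp.single s (coordA k Q a s) by
    rw [← Finsupp.sum_single (coordA k Q a), Finsupp.sum_fintype] <;> simp]
  rw [map_sum, Fintype.sum_sum_type]
  congr 1
  · exact Finset.sum_congr rfl fun j _ => recA_single_inl k Q j _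
  · exact Finset.sum_congr rfl fun b _ => recA_single_inr k Q b _

-- coordinates of generators
lemma coordA_vtxA (j : Q.V) : coordA k Q (vtxA k Q j) = Finsupp.single (Sum.inl j) 1 := by
  rw [coordA]
  dsimp
  rw [map_sum]
  rw [Finset.sum_congr rfl fun i _ => rho_vtxA k Q j (Sum.inl i)]
  simp [tgt, Finset.sum_ite_eq']

lemma coordA_arA (b : Q.E) : coordA k Q (arA k Q b) = Finsupp.single (Sum.inr b) 1 := by
  rw [coordA]
  dsimp
  rw [map_sum]
  rw [Finset.sum_congr rfl fun i _ => rho_arA k Q b (Sum.inl i)]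
  simp [tgt, Finset.sum_ite_eq']

lemma piA_vtxA (j i : Q.V) : piA k Q j (vtxA k Q i) = if i = j then 1 else 0 := by
  rw [piA, coordA_vtxA, Finsupp.single_apply]
  simp [Sum.inl.injEq]

lemma piA_arA (j : Q.V) (b : Q.E) : piA k Q j (arA k Q b) = 0 := by
  rw [piA, coordA_arA, Finsupp.single_apply]; simp

lemma tauA_vtxA (b : Q.E) (i : Q.V) : tauA k Q b (vtxA k Q i) = 0 := by
  rw [tauA, coordA_vtxA, Finsupp.single_apply]; simp

lemma tauA_arA (b e : Q.E) : tauA k Q b (arA k Q e) = if e = b then 1 else 0 := by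
  rw [tauA, coordA_arA, Finsupp.single_apply]
  simp [Sum.inr.injEq]

lemma rho_vtxA_inl (j : Q.V) (v : (Q.V ⊕ Q.E) →₀ k) (i : Q.V) :
    rho k Q (vtxA k Q j) v (Sum.inl i) = if i = j then v (Sum.inl i) else 0 := by
  induction v using Finsupp.induction_linear with
  | zero => simp
  | add f g hf hg =>
      rw [map_add, Finsupp.add_apply, hf, hg, Finsupp.add_apply]
      split_ifs <;> simp
  | single s c =>
      have hs : (Finsupp.single s c : (Q.V ⊕ Q.E) →₀ k) = c • Finsupp.single s 1 := by
        simp [Finsupp.smul_single]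
      rw [hs, map_smul]
      rcases s with i' | b
      · by_cases h : i' = j <;>
          simp [rho_vtxA, tgt, h, Finsupp.single_apply, Finsupp.smul_apply] <;> aesop
      · by_cases h : Q.t b = j <;>
          simp [rho_vtxA, tgt, h, Finsupp.single_apply, Finsupp.smul_apply]

lemma rho_vtxA_inr (j : Q.V) (v : (Q.V ⊕ Q.E) →₀ k) (b : Q.E) :
    rho k Q (vtxA k Q j) v (Sum.inr b) = if Q.t b = j then v (Sum.inr b) else 0 := by
  induction v using Finsupp.induction_linear with
  | zero => simp
  | add f g hf hg =>
      rw [map_add, Finsupp.add_apply, hf, hg, Finsupp.add_apply]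
      split_ifs <;> simp
  | single s c =>
      have hs : (Finsupp.single s c : (Q.V ⊕ Q.E) →₀ k) = c • Finsupp.single s 1 := by
        simp [Finsupp.smul_single]
      rw [hs, map_smul]
      rcases s with i' | b'
      · by_cases h : i' = j <;>
          simp [rho_vtxA, tgt, h, Finsupp.single_apply, Finsupp.smul_apply]
      · by_cases h : Q.t b' = j <;> by_cases h2 : b' = b <;>
          simp [rho_vtxA, tgt, h, h2, Finsupp.single_apply, Finsupp.smul_apply] <;> aesop

lemma rho_arA_apply (g : Q.E) (v : (Q.V ⊕ Q.E) →₀ k) :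
    rho k Q (arA k Q g) v = Finsupp.single (Sum.inr g) (v (Sum.inl (Q.s g))) := by
  induction v using Finsupp.induction_linear with
  | zero => simp
  | add f g' hf hg =>
      rw [map_add, hf, hg, Finsupp.add_apply, Finsupp.single_add]
  | single s c =>
      have hs : (Finsupp.single s c : (Q.V ⊕ Q.E) →₀ k) = c • Finsupp.single s 1 := by
        simp [Finsupp.smul_single]
      rw [hs, map_smul]
      rcases s with i | b
      · by_cases h : Q.s g = i <;>
          simp [rho_arA, tgt, h, Finsupp.single_apply, Finsupp.smul_single] <;> aesop
      · simp [rho_arA, tgt, Finsupp.single_apply]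

lemma coordA_mul (x a : AlgA k Q) :
    coordA k Q (x * a) = rho k Q x (coordA k Q a) := by
  show rho k Q (x * a) _ = _
  rw [map_mul, Module.End.mul_apply]
  rfl

lemma piA_vtxA_mul (j' j : Q.V) (a : AlgA k Q) :
    piA k Q j' (vtxA k Q j * a) = if j' = j then piA k Q j' a else 0 := by
  rw [piA, coordA_mul, rho_vtxA_inl]; rfl

lemma tauA_vtxA_mul (b : Q.E) (j : Q.V) (a : AlgA k Q) :
    tauA k Q b (vtxA k Q j * a) = if Q.t b = j then tauA k Q b a else 0 := by
  rw [tauA, coordA_mul, rho_vtxA_inr]; rfl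

lemma arA_mul (g : Q.E) (a : AlgA k Q) :
    arA k Q g * a = piA k Q (Q.s g) a • arA k Q g := by
  conv_lhs => rw [← recA_coordA k Q (arA k Q g * a)]
  rw [coordA_mul, rho_arA_apply, recA_single_inr]
  rfl

lemma expansion_rad {a : AlgA k Q} (h : ∀ j, piA k Q j a = 0) :
    a = ∑ b : Q.E, tauA k Q b a • arA k Q b := by
  conv_lhs => rw [expansion k Q a]
  simp [h]

lemma sum_vtxA_mul (a : AlgA k Q) : ∑ j : Q.V, vtxA k Q j * a = a := by
  rw [← Finset.sum_mul, sum_vtxA, one_mul]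

lemma vtxA_mul_vtxA_mul (j : Q.V) (a : AlgA k Q) :
    vtxA k Q j * (vtxA k Q j * a) = vtxA k Q j * a := by
  rw [← mul_assoc, vtxA_mul_vtxA, if_pos rfl]

lemma piA_add (j : Q.V) (a b : AlgA k Q) : piA k Q j (a + b) = piA k Q j a + piA k Q j b := by
  rw [piA, piA, piA, map_add, Finsupp.add_apply]

lemma piA_smul (j : Q.V) (c : k) (a : AlgA k Q) : piA k Q j (c • a) = c * piA k Q j a := by
  rw [piA, piA, map_smul, Finsupp.smul_apply, smul_eq_mul]

lemma tauA_add (b : Q.E) (a a' : AlgA k Q) :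
    tauA k Q b (a + a') = tauA k Q b a + tauA k Q b a' := by
  rw [tauA, tauA, tauA, map_add, Finsupp.add_apply]

lemma tauA_smul (b : Q.E) (c : k) (a : AlgA k Q) : tauA k Q b (c • a) = c * tauA k Q b a := by
  rw [tauA, tauA, map_smul, Finsupp.smul_apply, smul_eq_mul]

lemma piA_sub (j : Q.V) (a b : AlgA k Q) : piA k Q j (a - b) = piA k Q j a - piA k Q j b := by
  rw [piA, piA, piA, map_sub, Finsupp.sub_apply]

lemma piA_zero (j : Q.V) : piA k Q j (0 : AlgA k Q) = 0 := by
  rw [piA, map_zero, Finsupp.zero_apply]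

end QuivAlg


----------------------------------------------------------------
-- M-side auxiliary development
----------------------------------------------------------------

section Mside

variable {k : Type} [Field k] {Q : FQ} {l : ℕ}

/-- The index type of the basis of `M^l`. -/
abbrev MIdx (Q : FQ) (l : ℕ) := Σ x : Lam0 Q l, Option {e : Q.E // Q.t e = x.i}

instance : DecidableEq (Lam0 Q l) := Classical.decEq _
instance : DecidableEq (MIdx Q l) := Classical.decEq _

lemma idx_none_ne_some (y x : Lam0 Q l) (s : {e : Q.E // Q.t e = x.i}) :
    (⟨y, none⟩ : MIdx Q l) ≠ ⟨x, some s⟩ := by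
  intro h
  obtain ⟨h1, h2⟩ := Sigma.mk.inj_iff.1 h
  subst h1
  exact (Option.some_ne_none s).symm (eq_of_heq h2)

lemma idx_none_eq_iff (y x : Lam0 Q l) :
    (⟨y, none⟩ : MIdx Q l) = ⟨x, none⟩ ↔ y = x := by
  constructor
  · intro h; exact (Sigma.mk.inj_iff.1 h).1
  · rintro rfl; rfl

lemma idx_some_eq_iff (y x : Lam0 Q l) (f : Q.E) (hf : Q.t f = y.i) (e : Q.E)
    (he : Q.t e = x.i) :
    (⟨y, some ⟨f, hf⟩⟩ : MIdx Q l) = ⟨x, some ⟨e, he⟩⟩ ↔ y = x ∧ f = e := by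
  constructor
  · intro h
    obtain ⟨h1, h2⟩ := Sigma.mk.inj_iff.1 h
    subst h1
    have := eq_of_heq h2
    exact ⟨rfl, Subtype.mk.injEq .. ▸ (Option.some.inj this)⟩
  · rintro ⟨rfl, rfl⟩; rfl

/-- The map on indices underlying the differential. -/
def Fmap (x : Lam0 Q l) (e : Q.E) (he : Q.t e = x.i) : Lam0 Q (l + 1) :=
  ⟨Q.s e, x.b, QP.preCons e (QP.castSrc he.symm x.q),
    by simp [QP.length_preCons, QP.length_castSrc, x.len]⟩

lemma lam0_congr {x y : Lam0 Q l} (h : x = y) :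
    x.i = y.i ∧ x.b = y.b ∧ x.q.toList = y.q.toList := by subst h; exact ⟨rfl, rfl, rfl⟩

lemma Fmap_inj {x x' : Lam0 Q l} {e e' : Q.E} {he : Q.t e = x.i} {he' : Q.t e' = x'.i}
    (h : Fmap x e he = Fmap x' e' he') : x = x' ∧ e = e' := by
  obtain ⟨h1, h2, h3⟩ := lam0_congr h
  simp only [Fmap, QP.toList_preCons, QP.toList_castSrc] at h1 h2 h3
  have he2 : e = e' := by
    have := List.append_inj_right h3 (by
      have hx := x.len; have hx' := x'.len
      rw [← QP.length_toList] at hx hx'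
      omega)
    simpa using this
  have hq : x.q.toList = x'.q.toList := by
    have := List.append_inj_left h3 (by
      have hx := x.len; have hx' := x'.len
      rw [← QP.length_toList] at hx hx'
      omega)
    exact this
  subst he2
  exact ⟨Lam0.ext' (he.symm.trans he') h2 hq, rfl⟩

variable (dl : Mspace k Q l →ₗ[k] Mspace k Q (l + 1))

/-- coefficient formula detecting `A`-coordinates of `m` in `d m` -/
lemma d_coord (hd1' : ∀ x : Lam0 Q l, dl (mE x) = 0)
    (hd2' : ∀ (x : Lam0 Q l) (e : Q.E) (he : Q.t e = x.i), dl (mA x e he) = mE (Fmap x e he))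
    (m : Mspace k Q l) (x : Lam0 Q l) (e : Q.E) (he : Q.t e = x.i) :
    dl m ⟨Fmap x e he, none⟩ = m ⟨x, some ⟨e, he⟩⟩ := by
  induction m using Finsupp.induction_linear with
  | zero => simp
  | add f g hf hg => rw [map_add, Finsupp.add_apply, hf, hg, Finsupp.add_apply]
  | single idx c =>
      obtain ⟨y, o⟩ := idx
      rcases o with _ | ⟨f, hf⟩
      · have : (Finsupp.single (⟨y, none⟩ : MIdx Q l) c) = c • mE y := by
          simp [mE, Finsupp.smul_single]
        rw [this, map_smul, hd1' y, smul_zero, mE, Finsupp.smul_single, smul_eq_mul,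
          mul_one, Finsupp.zero_apply, Finsupp.single_apply,
          if_neg (idx_none_ne_some y x ⟨e, he⟩)]
      · have : (Finsupp.single (⟨y, some ⟨f, hf⟩⟩ : MIdx Q l) c) = c • mA y f hf := by
          simp [mA, Finsupp.smul_single]
        rw [this, map_smul, hd2' y f hf, mE, mA, Finsupp.smul_single, Finsupp.smul_single,
          smul_eq_mul, mul_one, Finsupp.single_apply, Finsupp.single_apply]
        by_cases h : y = x ∧ f = e
        · obtain ⟨rfl, rfl⟩ := h
          rw [if_pos rfl, if_pos rfl]
        · rw [if_neg (fun hh => h (Fmap_inj ((idx_none_eq_iff _ _).1 hh))),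
            if_neg (fun hh => h ((idx_some_eq_iff y x f hf e he).1 hh))]

/-- membership in the kernel via vanishing of `A`-coordinates -/
lemma d_zero_of_Esupp (hd1' : ∀ x : Lam0 Q l, dl (mE x) = 0) (m : Mspace k Q l)
    (hm : ∀ (x : Lam0 Q l) (e : Q.E) (he : Q.t e = x.i), m ⟨x, some ⟨e, he⟩⟩ = 0) :
    dl m = 0 := by
  conv_lhs => rw [← Finsupp.sum_single m]
  rw [map_finsuppSum, Finsupp.sum]
  apply Finset.sum_eq_zero
  intro idx _
  obtain ⟨y, o⟩ := idx
  rcases o with _ | ⟨f, hf⟩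
  · have : (Finsupp.single (⟨y, none⟩ : MIdx Q l) (m ⟨y, none⟩)) = m ⟨y, none⟩ • mE y := by
      simp [mE, Finsupp.smul_single]
    rw [this, map_smul, hd1' y, smul_zero]
  · rw [hm y f hf, Finsupp.single_zero, map_zero]

lemma d_coord_some
    (hd1' : ∀ x : Lam0 Q l, dl (mE x) = 0)
    (hd2' : ∀ (x : Lam0 Q l) (e : Q.E) (he : Q.t e = x.i), dl (mA x e he) = mE (Fmap x e he))
    (m : Mspace k Q l) (y : Lam0 Q (l + 1)) (s : {e : Q.E // Q.t e = y.i}) :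
    dl m ⟨y, some s⟩ = 0 := by
  induction m using Finsupp.induction_linear with
  | zero => simp
  | add f g hf hg => rw [map_add, Finsupp.add_apply, hf, hg, add_zero]
  | single idx c =>
      obtain ⟨z, o⟩ := idx
      rcases o with _ | ⟨f, hf⟩
      · have : (Finsupp.single (⟨z, none⟩ : MIdx Q l) c) = c • mE z := by
          simp [mE, Finsupp.smul_single]
        rw [this, map_smul, hd1' z, smul_zero, Finsupp.zero_apply]
      · have : (Finsupp.single (⟨z, some ⟨f, hf⟩⟩ : MIdx Q l) c) = c • mA z f hf := by
          simp [mA, Finsupp.smul_single]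
        rw [this, map_smul, hd2' z f hf, mE, Finsupp.smul_single, Finsupp.single_apply,
          if_neg (idx_none_ne_some _ y s)]

lemma lam0_zero (y : Lam0 Q 0) : y = ⟨y.i, y.i, QP.nil y.i, by simp [QP.length]⟩ := by
  obtain ⟨i, b, q, len⟩ := y
  obtain ⟨h, hq⟩ := QP.eq_nil_of_length_zero q len
  subst h
  cases hq
  rfl

section SigmaCoord

variable (σl : AlgA k Q →ₐ[k] Module.End k (Mspace k Q l))
variable (hσ1' : ∀ (j : Q.V) (x : Lam0 Q l), σl (vtxA k Q j) (mE x) = if x.i = j then mE x else 0)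
variable (hσ2' : ∀ (j : Q.V) (x : Lam0 Q l) (e : Q.E) (he : Q.t e = x.i),
    σl (vtxA k Q j) (mA x e he) = if Q.s e = j then mA x e he else 0)
variable (hσ3' : ∀ (b : Q.E) (x : Lam0 Q l), σl (arA k Q b) (mE x) = 0)
variable (hσ4' : ∀ (b : Q.E) (x : Lam0 Q l) (e : Q.E) (he : Q.t e = x.i),
    σl (arA k Q b) (mA x e he) = if b = e then mE x else 0)

lemma single_none_eq_smul_mE (y : Lam0 Q l) (c : k) :
    (Finsupp.single (⟨y, none⟩ : MIdx Q l) c : Mspace k Q l) = c • mE y := by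
  simp [mE, Finsupp.smul_single]

lemma single_some_eq_smul_mA (y : Lam0 Q l) (f : Q.E) (hf : Q.t f = y.i) (c : k) :
    (Finsupp.single (⟨y, some ⟨f, hf⟩⟩ : MIdx Q l) c : Mspace k Q l) = c • mA y f hf := by
  simp [mA, Finsupp.smul_single]

include hσ1' hσ2' in
lemma sigV_none (j : Q.V) (m : Mspace k Q l) (x : Lam0 Q l) :
    σl (vtxA k Q j) m ⟨x, none⟩ = if x.i = j then m ⟨x, none⟩ else 0 := by
  induction m using Finsupp.induction_linear with
  | zero => simp
  | add f g hf hg =>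
      rw [map_add, Finsupp.add_apply, hf, hg, Finsupp.add_apply]
      split_ifs <;> simp
  | single idx c =>
      obtain ⟨y, o⟩ := idx
      rcases o with _ | ⟨f, hf⟩
      · rw [single_none_eq_smul_mE, map_smul, hσ1' j y]
        by_cases hyx : y = x
        · subst hyx
          by_cases hyj : y.i = j <;>
            simp [hyj, mE, Finsupp.smul_single, Finsupp.single_apply]
        · have hne := (fun hh => hyx ((idx_none_eq_iff y x).1 hh))
          by_cases hyj : y.i = j <;>
            simp only [hyj, if_pos, if_neg, mE, Finsupp.smul_single, Finsupp.smul_apply,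
              Finsupp.single_apply, if_neg hne, ite_self, smul_zero, Finsupp.zero_apply] <;>
            split_ifs <;> simp_all
      · rw [single_some_eq_smul_mA, map_smul, hσ2' j y f hf]
        have hne : (⟨y, some ⟨f, hf⟩⟩ : MIdx Q l) ≠ ⟨x, none⟩ :=
          fun hh => idx_none_ne_some x y ⟨f, hf⟩ hh.symm
        by_cases hfj : Q.s f = j <;>
          simp only [hfj, if_pos, if_neg, mA, Finsupp.smul_single, Finsupp.smul_apply,
            Finsupp.single_apply, if_neg hne, ite_self, smul_zero, Finsupp.zero_apply] <;>
          split_ifs <;> simp_all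

include hσ1' hσ2' in
lemma sigV_some (j : Q.V) (m : Mspace k Q l) (x : Lam0 Q l) (e : Q.E) (he : Q.t e = x.i) :
    σl (vtxA k Q j) m ⟨x, some ⟨e, he⟩⟩ =
      if Q.s e = j then m ⟨x, some ⟨e, he⟩⟩ else 0 := by
  induction m using Finsupp.induction_linear with
  | zero => simp
  | add f g hf hg =>
      rw [map_add, Finsupp.add_apply, hf, hg, Finsupp.add_apply]
      split_ifs <;> simp
  | single idx c =>
      obtain ⟨y, o⟩ := idx
      rcases o with _ | ⟨f, hf⟩
      · rw [single_none_eq_smul_mE, map_smul, hσ1' j y]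
        have hne := idx_none_ne_some y x ⟨e, he⟩
        by_cases hyj : y.i = j <;>
          simp only [hyj, if_pos, if_neg, mE, Finsupp.smul_single, Finsupp.smul_apply,
            Finsupp.single_apply, if_neg hne, ite_self, smul_zero, Finsupp.zero_apply] <;>
          split_ifs <;> simp_all
      · rw [single_some_eq_smul_mA, map_smul, hσ2' j y f hf]
        by_cases hxy : y = x ∧ f = e
        · obtain ⟨rfl, rfl⟩ := hxy
          by_cases hfj : Q.s f = j <;>
            simp [hfj, mA, Finsupp.smul_single, Finsupp.single_apply]
        · have hne := (fun hh => hxy ((idx_some_eq_iff y x f hf e he).1 hh))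
          by_cases hfj : Q.s f = j <;>
            simp only [hfj, if_pos, if_neg, mA, Finsupp.smul_single, Finsupp.smul_apply,
              Finsupp.single_apply, if_neg hne, ite_self, smul_zero, Finsupp.zero_apply] <;>
            split_ifs <;> simp_all

include hσ3' hσ4' in
lemma sigA_none (b : Q.E) (m : Mspace k Q l) (x : Lam0 Q l) :
    σl (arA k Q b) m ⟨x, none⟩ =
      if h : Q.t b = x.i then m ⟨x, some ⟨b, h⟩⟩ else 0 := by
  induction m using Finsupp.induction_linear with
  | zero => simp
  | add f g hf hg =>
      rw [map_add, Finsupp.add_apply, hf, hg]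
      split_ifs with h
      · rw [Finsupp.add_apply]
      · rw [add_zero]
  | single idx c =>
      obtain ⟨y, o⟩ := idx
      rcases o with _ | ⟨f, hf⟩
      · rw [single_none_eq_smul_mE, map_smul, hσ3' b y, smul_zero, Finsupp.zero_apply]
        have hne : ∀ h : Q.t b = x.i, (⟨y, none⟩ : MIdx Q l) ≠ ⟨x, some ⟨b, h⟩⟩ :=
          fun h => idx_none_ne_some y x ⟨b, h⟩
        split_ifs with h
        · rw [mE, Finsupp.smul_single, Finsupp.single_apply, if_neg (hne h)]
        · rfl
      · rw [single_some_eq_smul_mA, map_smul, hσ4' b y f hf]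
        by_cases hbf : b = f
        · subst hbf
          by_cases hyx : y = x
          · subst hyx
            rw [if_pos rfl, dif_pos hf, mE, mA, Finsupp.smul_single, Finsupp.smul_single,
              Finsupp.single_apply, Finsupp.single_apply, if_pos rfl, if_pos rfl]
          · rw [if_pos rfl]
            have h1 : (c • mE y : Mspace k Q l) ⟨x, none⟩ = 0 := by
              rw [mE, Finsupp.smul_single, Finsupp.single_apply,
                if_neg (fun hh => hyx ((idx_none_eq_iff y x).1 hh))]
            rw [h1]
            split_ifs with h
            · rw [mA, Finsupp.smul_single, Finsupp.single_apply,
                if_neg (fun hh => hyx ((idx_some_eq_iff y x b hf b h).1 hh).1)]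
            · rfl
        · rw [if_neg hbf, smul_zero, Finsupp.zero_apply]
          split_ifs with h
          · rw [mA, Finsupp.smul_single, Finsupp.single_apply,
              if_neg (fun hh => hbf (((idx_some_eq_iff y x f hf b h).1 hh).2).symm)]
          · rfl

include hσ3' hσ4' in
lemma sigA_some (b : Q.E) (m : Mspace k Q l) (x : Lam0 Q l) (s : {e : Q.E // Q.t e = x.i}) :
    σl (arA k Q b) m ⟨x, some s⟩ = 0 := by
  induction m using Finsupp.induction_linear with
  | zero => simp
  | add f g hf hg => rw [map_add, Finsupp.add_apply, hf, hg, add_zero]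
  | single idx c =>
      obtain ⟨y, o⟩ := idx
      rcases o with _ | ⟨f, hf⟩
      · rw [single_none_eq_smul_mE, map_smul, hσ3' b y, smul_zero, Finsupp.zero_apply]
      · rw [single_some_eq_smul_mA, map_smul, hσ4' b y f hf]
        by_cases hbf : b = f
        · rw [if_pos hbf, mE, Finsupp.smul_single, Finsupp.single_apply,
            if_neg (idx_none_ne_some y x s)]
        · rw [if_neg hbf, smul_zero, Finsupp.zero_apply]

include hσ1' hσ2' hσ3' hσ4' in
/-- master coefficient formula at an `E`-index -/
lemma sig_none (a : AlgA k Q) (m : Mspace k Q l) (x : Lam0 Q l) :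
    σl a m ⟨x, none⟩ = QuivAlg.piA k Q x.i a * m ⟨x, none⟩ +
      ∑ b : Q.E, QuivAlg.tauA k Q b a *
        (if h : Q.t b = x.i then m ⟨x, some ⟨b, h⟩⟩ else 0) := by
  conv_lhs => rw [QuivAlg.expansion k Q a]
  rw [map_add, map_sum, map_sum, LinearMap.add_apply, Finsupp.add_apply]
  have e1 : ∀ j : Q.V, σl (QuivAlg.piA k Q j a • vtxA k Q j)
      = QuivAlg.piA k Q j a • σl (vtxA k Q j) :=
    fun j => map_smul σl.toLinearMap _ _
  have e2 : ∀ b : Q.E, σl (QuivAlg.tauA k Q b a • arA k Q b)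
      = QuivAlg.tauA k Q b a • σl (arA k Q b) :=
    fun b => map_smul σl.toLinearMap _ _
  congr 1
  · rw [LinearMap.sum_apply, Finsupp.finset_sum_apply]
    rw [Finset.sum_congr rfl (fun j (_ : j ∈ Finset.univ) => by
      rw [e1 j, LinearMap.smul_apply, Finsupp.smul_apply, smul_eq_mul,
        sigV_none σl hσ1' hσ2' j m x, mul_ite, mul_zero])]
    simp [Finset.sum_ite_eq]
  · rw [LinearMap.sum_apply, Finsupp.finset_sum_apply]
    exact Finset.sum_congr rfl fun b _ => by
      rw [e2 b, LinearMap.smul_apply, Finsupp.smul_apply, smul_eq_mul,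
        sigA_none σl hσ3' hσ4' b m x]

include hσ1' hσ2' hσ3' hσ4' in
/-- master coefficient formula at an `A`-index -/
lemma sig_some (a : AlgA k Q) (m : Mspace k Q l) (x : Lam0 Q l) (e : Q.E) (he : Q.t e = x.i) :
    σl a m ⟨x, some ⟨e, he⟩⟩ = QuivAlg.piA k Q (Q.s e) a * m ⟨x, some ⟨e, he⟩⟩ := by
  conv_lhs => rw [QuivAlg.expansion k Q a]
  rw [map_add, map_sum, map_sum, LinearMap.add_apply, Finsupp.add_apply]
  have e1 : ∀ j : Q.V, σl (QuivAlg.piA k Q j a • vtxA k Q j)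
      = QuivAlg.piA k Q j a • σl (vtxA k Q j) :=
    fun j => map_smul σl.toLinearMap _ _
  have e2 : ∀ b : Q.E, σl (QuivAlg.tauA k Q b a • arA k Q b)
      = QuivAlg.tauA k Q b a • σl (arA k Q b) :=
    fun b => map_smul σl.toLinearMap _ _
  have h2 : ((∑ b : Q.E, σl (QuivAlg.tauA k Q b a • arA k Q b)) m) ⟨x, some ⟨e, he⟩⟩ = 0 := by
    rw [LinearMap.sum_apply, Finsupp.finset_sum_apply]
    exact Finset.sum_eq_zero fun b _ => by
      rw [e2 b, LinearMap.smul_apply, Finsupp.smul_apply,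
        sigA_some σl hσ3' hσ4' b m x ⟨e, he⟩, smul_zero]
  rw [h2, add_zero, LinearMap.sum_apply, Finsupp.finset_sum_apply]
  rw [Finset.sum_congr rfl (fun j (_ : j ∈ Finset.univ) => by
    rw [e1 j, LinearMap.smul_apply, Finsupp.smul_apply, smul_eq_mul,
      sigV_some σl hσ1' hσ2' j m x e he, mul_ite, mul_zero])]
  simp [Finset.sum_ite_eq]

end SigmaCoord

lemma mE_mem_range
    (hd2' : ∀ (x : Lam0 Q l) (e : Q.E) (he : Q.t e = x.i), dl (mA x e he) = mE (Fmap x e he))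
    (y : Lam0 Q (l + 1)) : mE y ∈ LinearMap.range dl := by
  obtain ⟨e, h, q', hq', hy⟩ := QP.exists_strip y.q (by rw [y.len])
  have hx : mE y = dl (mA (⟨Q.t e, y.b, q', hq'⟩ : Lam0 Q l) e rfl) := by
    rw [hd2' _ e rfl]
    congr 1
    apply Lam0.ext'
    · exact h.symm
    · rfl
    · show y.q.toList = _
      rw [hy, QP.toList_castSrc]
      simp [Fmap, QP.toList_preCons, QP.toList_castSrc]
  rw [hx]
  exact LinearMap.mem_range_self _ _

end Mside

set_option maxHeartbeats 3200000 in
/-- **An injective resolution of `kQ₀ = A/rad A` (Lemma 3.3).**  Let `Q` be a finite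
quiver without sources and `A = kQ/J²`.  Consider the complex `M•` with
`M^l = ⊕_{i ∈ Q₀} I_i^{(Λ^{l,0}_i)}` for `l ≥ 0` (and `0` for `l < 0`), where the
left `A`-module structure `σ` on each `M^l` is the one of a direct sum of the
injective envelopes `I_i = D(e_i A)`, and the `A`-linear differential `d` satisfies
`d^l(e_i^♯ ζ_{(e_i,q)}) = 0` and
`d^l(α^♯ ζ_{(e_i,q)}) = e_{s(α)}^♯ ζ_{(e_{s(α)}, qα)}`, and let `kQ₀ = Q₀ →₀ k` carry
the `A`-module structure `sW` with `e_j · e_i = δ_{ij} e_i` and `α · e_i = 0`.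
Then `M•` is an injective resolution of `kQ₀`: each `M^l` is an injective `A`-module,
`H⁰(M•) = Ker d⁰ ≅ kQ₀` as `A`-modules, and `H^l(M•) = 0` for `l ≠ 0`, i.e.
`Im d^l = Ker d^{l+1}` for all `l ≥ 0`. -/
theorem injective_resolution_of_semisimple_quotient (k : Type) [Field k]
    (Q : FQ) (hQ : Q.NoSources)
    (sW : AlgA k Q →ₐ[k] Module.End k (Q.V →₀ k))
    (hsW1 : ∀ i j : Q.V, sW (vtxA k Q j) (Finsupp.single i 1) =
      if i = j then Finsupp.single i 1 else 0)
    (hsW2 : ∀ (e : Q.E) (i : Q.V), sW (arA k Q e) (Finsupp.single i 1) = 0)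
    (σ : ∀ l : ℕ, AlgA k Q →ₐ[k] Module.End k (Mspace k Q l))
    (hσ1 : ∀ (l : ℕ) (j : Q.V) (x : Lam0 Q l),
      σ l (vtxA k Q j) (mE x) = if x.i = j then mE x else 0)
    (hσ2 : ∀ (l : ℕ) (j : Q.V) (x : Lam0 Q l) (e : Q.E) (he : Q.t e = x.i),
      σ l (vtxA k Q j) (mA x e he) = if Q.s e = j then mA x e he else 0)
    (hσ3 : ∀ (l : ℕ) (b : Q.E) (x : Lam0 Q l), σ l (arA k Q b) (mE x) = 0)
    (hσ4 : ∀ (l : ℕ) (b : Q.E) (x : Lam0 Q l) (e : Q.E) (he : Q.t e = x.i),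
      σ l (arA k Q b) (mA x e he) = if b = e then mE x else 0)
    (d : ∀ l : ℕ, Mspace k Q l →ₗ[k] Mspace k Q (l + 1))
    (hdA : ∀ (l : ℕ) (a : AlgA k Q) (m : Mspace k Q l),
      d l (σ l a m) = σ (l + 1) a (d l m))
    (hd1 : ∀ (l : ℕ) (x : Lam0 Q l), d l (mE x) = 0)
    (hd2 : ∀ (l : ℕ) (x : Lam0 Q l) (e : Q.E) (he : Q.t e = x.i),
      d l (mA x e he) =
        mE (⟨Q.s e, x.b, QP.preCons e (QP.castSrc he.symm x.q),
          by simp [QP.length_preCons, QP.length_castSrc, x.len]⟩ : Lam0 Q (l + 1))) :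
    (∀ l : ℕ,
      letI : Module (AlgA k Q) (Mspace k Q l) := Module.compHom _ (σ l).toRingHom
      Module.Injective (AlgA k Q) (Mspace k Q l)) ∧
    (∃ φ : (Q.V →₀ k) →ₗ[k] Mspace k Q 0,
      Function.Injective φ ∧ LinearMap.range φ = LinearMap.ker (d 0) ∧
      ∀ (a : AlgA k Q) (w : Q.V →₀ k), φ (sW a w) = σ 0 a (φ w)) ∧
    (∀ l : ℕ, LinearMap.range (d l) = LinearMap.ker (d (l + 1))) := by
  have hd2' : ∀ (l : ℕ) (x : Lam0 Q l) (e : Q.E) (he : Q.t e = x.i),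
      d l (mA x e he) = mE (Fmap x e he) := fun l x e he => hd2 l x e he
  refine ⟨?_, ?_, ?_⟩
  · -- Part 1 : injectivity via Baer's criterion
    intro l
    letI instM : Module (AlgA k Q) (Mspace k Q l) := Module.compHom _ (σ l).toRingHom
    have hsmul : ∀ (a : AlgA k Q) (m : Mspace k Q l), a • m = σ l a m := fun a m => rfl
    apply Module.Baer.injective
    intro I g
    classical
    -- generalities about `g`
    have hksmulI : ∀ (c : k) (v : AlgA k Q), v ∈ I → c • v ∈ I := fun c v hv => by
      have := I.smul_mem (algebraMap k (AlgA k Q) c) hv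
      rwa [algebraMap_smul] at this
    have hmulI : ∀ (a v : AlgA k Q), v ∈ I → a * v ∈ I := fun a v hv => by
      have := I.smul_mem a hv
      rwa [smul_eq_mul] at this
    have gcongr : ∀ (v w : AlgA k Q) (hv : v ∈ I) (hw : w ∈ I), v = w →
        g ⟨v, hv⟩ = g ⟨w, hw⟩ := by rintro v w hv hw rfl; rfl
    have gsmulA : ∀ (a : AlgA k Q) (x : I), g (a • x) = σ l a (g x) := fun a x => by
      rw [map_smul, hsmul]
    have hgmul : ∀ (a : AlgA k Q) (x : I) (h : a * (x : AlgA k Q) ∈ I),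
        g ⟨a * (x : AlgA k Q), h⟩ = σ l a (g x) := by
      intro a x h
      have h1 : (⟨a * (x : AlgA k Q), h⟩ : I) = a • x := Subtype.ext rfl
      rw [h1, gsmulA]
    have gsmulk : ∀ (c : k) (x : I), g (c • x) = c • g x := fun c x => by
      have h1 : (c • x : I) = (algebraMap k (AlgA k Q) c) • x :=
        Subtype.ext (algebraMap_smul (AlgA k Q) c (x : AlgA k Q)).symm
      rw [h1, gsmulA, AlgHom.commutes, Module.algebraMap_end_apply]
    -- chosen generators of the "semisimple part" of I
    set cond : Q.V → Prop := fun j => ∃ a, a ∈ I ∧ QuivAlg.piA k Q j a ≠ 0 with hcond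
    set bj : ∀ j, cond j → AlgA k Q := fun j hj =>
      (QuivAlg.piA k Q j hj.choose)⁻¹ • (vtxA k Q j * hj.choose) with hbj
    have hbjI : ∀ j hj, bj j hj ∈ I := fun j hj =>
      hksmulI _ _ (hmulI _ _ hj.choose_spec.1)
    have hpibj : ∀ j hj j', QuivAlg.piA k Q j' (bj j hj) = if j' = j then 1 else 0 := by
      intro j hj j'
      rw [hbj]
      dsimp only
      rw [QuivAlg.piA_smul, QuivAlg.piA_vtxA_mul]
      split_ifs with h
      · subst h
        exact inv_mul_cancel₀ hj.choose_spec.2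
      · rw [mul_zero]
    have htbj : ∀ j hj b, Q.t b ≠ j → QuivAlg.tauA k Q b (bj j hj) = 0 := by
      intro j hj b hb
      rw [hbj]
      dsimp only
      rw [QuivAlg.tauA_smul, QuivAlg.tauA_vtxA_mul, if_neg hb, mul_zero]
    have hejbj : ∀ j hj, vtxA k Q j * bj j hj = bj j hj := by
      intro j hj
      rw [hbj]
      dsimp only
      rw [mul_smul_comm, QuivAlg.vtxA_mul_vtxA_mul]
    -- the radical part of I and its image under g
    set inW : AlgA k Q → Prop := fun w => w ∈ I ∧ ∀ j, QuivAlg.piA k Q j w = 0 with hinW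
    have hWsome : ∀ w (hw : inW w) (x : Lam0 Q l) (e : Q.E) (he : Q.t e = x.i),
        g ⟨w, hw.1⟩ ⟨x, some ⟨e, he⟩⟩ = 0 := by
      intro w hw x e he
      have h1 : arA k Q e * w = 0 := by
        rw [QuivAlg.arA_mul, hw.2 (Q.s e), zero_smul]
      have h2 : σ l (arA k Q e) (g ⟨w, hw.1⟩) = 0 := by
        rw [← hgmul (arA k Q e) ⟨w, hw.1⟩ (hmulI _ _ hw.1),
          gcongr _ 0 (hmulI _ _ hw.1) (Submodule.zero_mem I) h1]
        exact map_zero g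
      have h3 := congrArg (fun mm : Mspace k Q l => mm ⟨x, none⟩) h2
      rw [sigA_none (σ l) (hσ3 l) (hσ4 l) e (g ⟨w, hw.1⟩) x, dif_pos he,
        Finsupp.zero_apply] at h3
      exact h3
    -- the subspaces W_x and the extended functionals
    set Wx : Lam0 Q l → Submodule k (AlgA k Q) := fun x =>
      { carrier := {w | w ∈ I ∧ (∀ j, QuivAlg.piA k Q j w = 0) ∧ vtxA k Q x.i * w = w}
        add_mem' := by
          rintro u v ⟨hu1, hu2, hu3⟩ ⟨hv1, hv2, hv3⟩
          exact ⟨I.add_mem hu1 hv1,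
            fun j => by rw [QuivAlg.piA_add, hu2 j, hv2 j, add_zero],
            by rw [mul_add, hu3, hv3]⟩
        zero_mem' := ⟨I.zero_mem, fun j => QuivAlg.piA_zero k Q j, by rw [mul_zero]⟩
        smul_mem' := by
          rintro c v ⟨hv1, hv2, hv3⟩
          exact ⟨hksmulI c v hv1,
            fun j => by rw [QuivAlg.piA_smul, hv2 j, mul_zero],
            by rw [mul_smul_comm, hv3]⟩ } with hWx
    have hWxmem : ∀ (x : Lam0 Q l) (w : AlgA k Q), w ∈ Wx x ↔
        (w ∈ I ∧ (∀ j, QuivAlg.piA k Q j w = 0) ∧ vtxA k Q x.i * w = w) := fun x w =>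
      Iff.rfl
    set G : ↥I →ₗ[k] Mspace k Q l :=
      { toFun := fun v => g v
        map_add' := fun u v => map_add g u v
        map_smul' := fun c v => by
          show g (c • v) = (RingHom.id k) c • g v
          rw [gsmulk]
          rfl } with hG
    set inclWx : (x : Lam0 Q l) → (↥(Wx x) →ₗ[k] ↥I) := fun x =>
      { toFun := fun w => ⟨(w : AlgA k Q), w.2.1⟩
        map_add' := fun u v => rfl
        map_smul' := fun c v => rfl } with hincl
    set φx : (x : Lam0 Q l) → (↥(Wx x) →ₗ[k] k) := fun x =>
      (Finsupp.lapply (⟨x, none⟩ : MIdx Q l)).comp ((G).comp (inclWx x)) with hφx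
    have hext : ∀ x : Lam0 Q l, ∃ ψ : AlgA k Q →ₗ[k] k,
        ∀ (w : AlgA k Q) (hw : w ∈ Wx x), ψ w = g ⟨w, hw.1⟩ ⟨x, none⟩ := by
      intro x
      obtain ⟨h, hh⟩ := LinearMap.exists_extend (φx x)
      refine ⟨h, fun w hw => ?_⟩
      have := congrArg (fun f : ↥(Wx x) →ₗ[k] k => f ⟨w, hw⟩) hh
      rw [LinearMap.comp_apply] at this
      exact this.trans rfl
    set ψ : Lam0 Q l → (AlgA k Q →ₗ[k] k) := fun x => (hext x).choose with hψdef
    have hψ : ∀ (x : Lam0 Q l) (w : AlgA k Q) (hw : w ∈ Wx x),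
        ψ x w = g ⟨w, hw.1⟩ ⟨x, none⟩ := fun x => (hext x).choose_spec
    -- the candidate element m₀
    haveI : Finite (MIdx Q l) := by infer_instance
    set m0 : Mspace k Q l := Finsupp.equivFunOnFinite.symm (fun idx =>
      match idx with
      | ⟨x, none⟩ => if hc : cond x.i then
            g ⟨bj x.i hc, hbjI x.i hc⟩ ⟨x, none⟩ -
              ∑ b : Q.E, QuivAlg.tauA k Q b (bj x.i hc) *
                (if h : Q.t b = x.i then ψ x (arA k Q b) else 0)
          else 0
      | ⟨x, some ⟨e, _⟩⟩ => ψ x (arA k Q e)) with hm0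
    have hm0some : ∀ (x : Lam0 Q l) (e : Q.E) (he : Q.t e = x.i),
        m0 ⟨x, some ⟨e, he⟩⟩ = ψ x (arA k Q e) := fun x e he => rfl
    have hm0none : ∀ x : Lam0 Q l, m0 ⟨x, none⟩ = if hc : cond x.i then
          g ⟨bj x.i hc, hbjI x.i hc⟩ ⟨x, none⟩ -
            ∑ b : Q.E, QuivAlg.tauA k Q b (bj x.i hc) *
              (if h : Q.t b = x.i then ψ x (arA k Q b) else 0)
        else 0 := fun x => rfl
    -- the A-coordinates
    have Hsome : ∀ (a : AlgA k Q) (ha : a ∈ I) (x : Lam0 Q l) (e : Q.E) (he : Q.t e = x.i),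
        σ l a m0 ⟨x, some ⟨e, he⟩⟩ = g ⟨a, ha⟩ ⟨x, some ⟨e, he⟩⟩ := by
      intro a ha x e he
      rw [sig_some (σ l) (hσ1 l) (hσ2 l) (hσ3 l) (hσ4 l) a m0 x e he, hm0some]
      by_cases hc : cond (Q.s e)
      · have h2 : arA k Q e * bj (Q.s e) hc = arA k Q e := by
          rw [QuivAlg.arA_mul, hpibj (Q.s e) hc (Q.s e), if_pos rfl, one_smul]
        have heI : arA k Q e ∈ I := by
          rw [← h2]; exact hmulI _ _ (hbjI _ hc)
        have heW : arA k Q e ∈ Wx x := by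
          rw [hWxmem]
          exact ⟨heI, fun j => QuivAlg.piA_arA k Q j e,
            by rw [QuivAlg.vtxA_mul_arA, if_pos he]⟩
        rw [hψ x _ heW]
        have h3 : arA k Q e * a = QuivAlg.piA k Q (Q.s e) a • arA k Q e :=
          QuivAlg.arA_mul k Q e a
        have h4 : σ l (arA k Q e) (g ⟨a, ha⟩)
            = QuivAlg.piA k Q (Q.s e) a • g ⟨arA k Q e, heI⟩ := by
          rw [← hgmul (arA k Q e) ⟨a, ha⟩ (hmulI _ _ ha),
            gcongr _ _ (hmulI _ _ ha) (hksmulI _ _ heI) h3,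
            show (⟨QuivAlg.piA k Q (Q.s e) a • arA k Q e, hksmulI _ _ heI⟩ : I)
              = QuivAlg.piA k Q (Q.s e) a • ⟨arA k Q e, heI⟩ from rfl,
            gsmulk]
        have h5 := congrArg (fun mm : Mspace k Q l => mm ⟨x, none⟩) h4
        rw [sigA_none (σ l) (hσ3 l) (hσ4 l) e (g ⟨a, ha⟩) x, dif_pos he,
          Finsupp.smul_apply, smul_eq_mul] at h5
        rw [← h5]
      · have hpi0 : QuivAlg.piA k Q (Q.s e) a = 0 := by
          by_contra h
          exact hc ⟨a, ha, h⟩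
        rw [hpi0, zero_mul]
        have hwI : vtxA k Q (Q.s e) * a ∈ I := hmulI _ _ ha
        have hwW : inW (vtxA k Q (Q.s e) * a) := by
          refine ⟨hwI, fun j => ?_⟩
          rw [QuivAlg.piA_vtxA_mul]
          split_ifs with h
          · rw [h, hpi0]
          · rfl
        have h5 := hWsome _ hwW x e he
        have h6 := congrArg (fun mm : Mspace k Q l => mm ⟨x, some ⟨e, he⟩⟩)
          (hgmul (vtxA k Q (Q.s e)) ⟨a, ha⟩ hwI)
        dsimp only at h6
        rw [sigV_some (σ l) (hσ1 l) (hσ2 l) (Q.s e) (g ⟨a, ha⟩) x e he, if_pos rfl] at h6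
        rw [← h6]
        exact h5.symm
    -- the E-coordinates on radical elements
    have HnoneW : ∀ (w : AlgA k Q) (hw : inW w) (x : Lam0 Q l),
        σ l w m0 ⟨x, none⟩ = g ⟨w, hw.1⟩ ⟨x, none⟩ := by
      intro w hw x
      rw [sig_none (σ l) (hσ1 l) (hσ2 l) (hσ3 l) (hσ4 l) w m0 x, hw.2 x.i, zero_mul, zero_add]
      have hw1I : vtxA k Q x.i * w ∈ I := hmulI _ _ hw.1
      have hw1pi : ∀ j, QuivAlg.piA k Q j (vtxA k Q x.i * w) = 0 := by
        intro j
        rw [QuivAlg.piA_vtxA_mul]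
        split_ifs with h
        · exact hw.2 j
        · rfl
      have hw1W : vtxA k Q x.i * w ∈ Wx x := by
        rw [hWxmem]
        exact ⟨hw1I, hw1pi, QuivAlg.vtxA_mul_vtxA_mul k Q x.i w⟩
      have step1 : ∑ b : Q.E, QuivAlg.tauA k Q b w *
          (if h : Q.t b = x.i then m0 ⟨x, some ⟨b, h⟩⟩ else 0)
          = ∑ b : Q.E, QuivAlg.tauA k Q b (vtxA k Q x.i * w) * ψ x (arA k Q b) := by
        apply Finset.sum_congr rfl
        intro b _
        rw [QuivAlg.tauA_vtxA_mul]
        split_ifs with h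
        · rw [hm0some x b h]
        · rw [mul_zero, zero_mul]
      have step2 : ∑ b : Q.E, QuivAlg.tauA k Q b (vtxA k Q x.i * w) * ψ x (arA k Q b)
          = ψ x (vtxA k Q x.i * w) := by
        conv_rhs => rw [QuivAlg.expansion_rad k Q hw1pi]
        rw [map_sum]
        apply Finset.sum_congr rfl
        intro b _
        rw [map_smul, smul_eq_mul]
      rw [step1, step2, hψ x _ hw1W]
      have h6 := congrArg (fun mm : Mspace k Q l => mm ⟨x, none⟩)
        (hgmul (vtxA k Q x.i) ⟨w, hw.1⟩ hw1I)
      dsimp only at h6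
      rw [sigV_none (σ l) (hσ1 l) (hσ2 l) x.i (g ⟨w, hw.1⟩) x, if_pos rfl] at h6
      exact h6
    -- the E-coordinates on the chosen generators
    have Hnonebj : ∀ (j : Q.V) (hj : cond j) (x : Lam0 Q l),
        σ l (bj j hj) m0 ⟨x, none⟩ = g ⟨bj j hj, hbjI j hj⟩ ⟨x, none⟩ := by
      intro j hj x
      rw [sig_none (σ l) (hσ1 l) (hσ2 l) (hσ3 l) (hσ4 l) _ m0 x]
      by_cases hx : x.i = j
      · subst hx
        rw [hpibj x.i hj x.i, if_pos rfl, one_mul, hm0none x, dif_pos hj]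
        have hsame : ∑ b : Q.E, QuivAlg.tauA k Q b (bj x.i hj) *
            (if h : Q.t b = x.i then m0 ⟨x, some ⟨b, h⟩⟩ else 0)
            = ∑ b : Q.E, QuivAlg.tauA k Q b (bj x.i hj) *
            (if h : Q.t b = x.i then ψ x (arA k Q b) else 0) := by
          apply Finset.sum_congr rfl
          intro b _
          by_cases h : Q.t b = x.i
          · rw [dif_pos h, dif_pos h, hm0some x b h]
          · rw [dif_neg h, dif_neg h]
        rw [hsame]
        ring
      · rw [hpibj j hj x.i, if_neg hx, zero_mul, zero_add]
        have hz : ∑ b : Q.E, QuivAlg.tauA k Q b (bj j hj) *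
            (if h : Q.t b = x.i then m0 ⟨x, some ⟨b, h⟩⟩ else 0) = 0 := by
          apply Finset.sum_eq_zero
          intro b _
          split_ifs with h
          · rw [htbj j hj b (by rw [h]; exact hx), zero_mul]
          · rw [mul_zero]
        rw [hz]
        have h6 := congrArg (fun mm : Mspace k Q l => mm ⟨x, none⟩)
          (hgmul (vtxA k Q j) ⟨bj j hj, hbjI j hj⟩ (hmulI _ _ (hbjI j hj)))
        dsimp only at h6
        rw [sigV_none (σ l) (hσ1 l) (hσ2 l) j (g ⟨bj j hj, hbjI j hj⟩) x, if_neg hx,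
          gcongr _ _ (hmulI _ _ (hbjI j hj)) (hbjI j hj) (hejbj j hj)] at h6
        exact h6.symm
    -- the main identity
    have Hmain : ∀ (a : AlgA k Q) (ha : a ∈ I), σ l a m0 = g ⟨a, ha⟩ := by
      intro a ha
      set selt : Q.V → AlgA k Q := fun j =>
        if hj : cond j then QuivAlg.piA k Q j a • bj j hj else 0 with hselt
      have hseltI : ∀ j, selt j ∈ I := by
        intro j
        rw [hselt]
        dsimp only
        split_ifs with hj
        · exact hksmulI _ _ (hbjI j hj)
        · exact I.zero_mem
      have hsumI : (∑ j : Q.V, selt j) ∈ I := Submodule.sum_mem _ fun j _ => hseltI j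
      have huI : a - ∑ j : Q.V, selt j ∈ I := I.sub_mem ha hsumI
      have hupi : ∀ j', QuivAlg.piA k Q j' (a - ∑ j : Q.V, selt j) = 0 := by
        intro j'
        rw [QuivAlg.piA_sub]
        have hsum : QuivAlg.piA k Q j' (∑ j : Q.V, selt j)
            = ∑ j : Q.V, QuivAlg.piA k Q j' (selt j) := by
          show QuivAlg.coordA k Q _ _ = _
          rw [map_sum, Finsupp.finset_sum_apply]
          rfl
        have hterm : ∀ j : Q.V, QuivAlg.piA k Q j' (selt j)
            = if j = j' then (if cond j' then QuivAlg.piA k Q j' a else 0) else 0 := by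
          intro j
          by_cases hjj : j = j'
          · subst hjj
            rw [if_pos rfl, hselt]
            dsimp only
            by_cases hc : cond j
            · rw [dif_pos hc, if_pos hc, QuivAlg.piA_smul, hpibj j hc j, if_pos rfl, mul_one]
            · rw [dif_neg hc, if_neg hc, QuivAlg.piA_zero]
          · rw [if_neg hjj, hselt]
            dsimp only
            split_ifs with hc
            · rw [QuivAlg.piA_smul, hpibj j hc j', if_neg (fun hh => hjj hh.symm), mul_zero]
            · exact QuivAlg.piA_zero k Q j'
        rw [hsum, Finset.sum_congr rfl fun j _ => hterm j,
          Finset.sum_ite_eq' Finset.univ j'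
            (fun _ => if cond j' then QuivAlg.piA k Q j' a else 0),
          if_pos (Finset.mem_univ j')]
        by_cases hc : cond j'
        · rw [if_pos hc, sub_self]
        · rw [if_neg hc]
          have h0 : QuivAlg.piA k Q j' a = 0 := by
            by_contra h
            exact hc ⟨a, ha, h⟩
          rw [h0, sub_zero]
      have hdecomp : a = (∑ j : Q.V, selt j) + (a - ∑ j : Q.V, selt j) := by abel
      have hIdecomp : (⟨a, ha⟩ : I) = (∑ j : Q.V, (⟨selt j, hseltI j⟩ : I))
          + ⟨a - ∑ j : Q.V, selt j, huI⟩ := by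
        apply Subtype.ext
        rw [Submodule.coe_add, AddSubmonoidClass.coe_finset_sum]
        exact hdecomp
      have hgd : g ⟨a, ha⟩ = (∑ j : Q.V, g ⟨selt j, hseltI j⟩)
          + g ⟨a - ∑ j : Q.V, selt j, huI⟩ := by
        rw [hIdecomp, map_add, map_sum]
      have hσd : ∀ idx : MIdx Q l, σ l a m0 idx = (∑ j : Q.V, σ l (selt j) m0 idx)
          + σ l (a - ∑ j : Q.V, selt j) m0 idx := by
        intro idx
        conv_lhs => rw [hdecomp]
        rw [map_add, map_sum, LinearMap.add_apply, Finsupp.add_apply,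
          LinearMap.sum_apply, Finsupp.finset_sum_apply]
      apply Finsupp.ext
      intro idx
      obtain ⟨x, o⟩ := idx
      rcases o with _ | ⟨e, he⟩
      · rw [hσd ⟨x, none⟩, hgd, Finsupp.add_apply, Finsupp.finset_sum_apply]
        congr 1
        · apply Finset.sum_congr rfl
          intro j _
          by_cases hj : cond j
          · have h1 : selt j = QuivAlg.piA k Q j a • bj j hj := by
              rw [hselt]
              dsimp only
              rw [dif_pos hj]
            have h2 : σ l (selt j) = QuivAlg.piA k Q j a • σ l (bj j hj) := by
              rw [h1]
              exact map_smul (σ l).toLinearMap _ _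
            rw [h2, LinearMap.smul_apply, Finsupp.smul_apply, smul_eq_mul, Hnonebj j hj x,
              gcongr _ _ (hseltI j) (hksmulI _ _ (hbjI j hj)) h1,
              show (⟨QuivAlg.piA k Q j a • bj j hj, hksmulI _ _ (hbjI j hj)⟩ : I)
                = QuivAlg.piA k Q j a • ⟨bj j hj, hbjI j hj⟩ from rfl,
              gsmulk, Finsupp.smul_apply, smul_eq_mul]
          · have h1 : selt j = 0 := by
              rw [hselt]
              dsimp only
              rw [dif_neg hj]
            rw [gcongr _ _ (hseltI j) I.zero_mem h1,
              show (⟨(0 : AlgA k Q), I.zero_mem⟩ : I) = 0 from rfl, map_zero,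
              show σ l (selt j) = 0 from by rw [h1, map_zero]]
            rfl
        · exact HnoneW _ ⟨huI, hupi⟩ x
      · exact Hsome a ha x e he
    refine ⟨{ toFun := fun a => σ l a m0
              map_add' := fun a b => by
                show σ l (a + b) m0 = σ l a m0 + σ l b m0
                rw [map_add, LinearMap.add_apply]
              map_smul' := fun a b => by
                show σ l (a * b) m0 = σ l a (σ l b m0)
                rw [map_mul, Module.End.mul_apply] }, ?_⟩
    intro x mem
    exact Hmain x mem
  · -- Part 2 : H⁰
    classical
    set emb : Q.V → MIdx Q 0 := fun i => ⟨⟨i, i, QP.nil i, by simp [QP.length]⟩, none⟩ with hemb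
    have hembinj : Function.Injective emb := by
      intro i i' h
      have := (Sigma.mk.inj_iff.1 h).1
      exact congrArg Lam0.i this
    refine ⟨Finsupp.lmapDomain k k emb, Finsupp.mapDomain_injective hembinj, ?_, ?_⟩
    · -- range = ker (d 0)
      apply le_antisymm
      · rintro m ⟨w, rfl⟩
        simp only [LinearMap.mem_ker, Finsupp.lmapDomain_apply]
        apply d_zero_of_Esupp (d 0) (hd1 0)
        intro x e he
        apply Finsupp.mapDomain_notin_range
        rintro ⟨i, hi⟩
        exact idx_none_ne_some _ x ⟨e, he⟩ hi
      · intro m hm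
        rw [LinearMap.mem_ker] at hm
        have hms : ∀ (x : Lam0 Q 0) (e : Q.E) (he : Q.t e = x.i), m ⟨x, some ⟨e, he⟩⟩ = 0 := by
          intro x e he
          rw [← d_coord (d 0) (hd1 0) (hd2' 0) m x e he, hm, Finsupp.zero_apply]
        rw [← Finsupp.sum_single m, Finsupp.sum]
        apply Submodule.sum_mem
        intro idx _
        obtain ⟨y, o⟩ := idx
        rcases o with _ | ⟨f, hf⟩
        · refine ⟨Finsupp.single y.i (m ⟨y, none⟩), ?_⟩
          simp only [Finsupp.lmapDomain_apply, Finsupp.mapDomain_single]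
          exact congrArg (fun z : Lam0 Q 0 => Finsupp.single (⟨z, none⟩ : MIdx Q 0)
            (m ⟨y, none⟩)) (lam0_zero y).symm
        · rw [hms y f hf, Finsupp.single_zero]
          exact Submodule.zero_mem _
    · -- equivariance
      intro a w
      obtain ⟨xa, rfl⟩ := RingQuot.mkAlgHom_surjective k (ARel k Q) a
      induction xa using FreeAlgebra.induction generalizing w with
      | grade0 c =>
          rw [AlgHom.commutes, AlgHom.commutes]
          simp [Module.algebraMap_end_apply]
      | grade1 g =>
          rcases g with j | b
          · show (Finsupp.lmapDomain k k emb) (sW (vtxA k Q j) w) = σ 0 (vtxA k Q j) _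
            induction w using Finsupp.induction_linear with
            | zero => simp
            | add f g hf hg => rw [map_add, map_add, map_add, map_add, hf, hg]
            | single i c =>
                have h1 : (Finsupp.single i c : Q.V →₀ k) = c • Finsupp.single i 1 := by
                  simp [Finsupp.smul_single]
                rw [h1, map_smul, map_smul, map_smul, map_smul, hsW1]
                congr 1
                have h2 : (Finsupp.lmapDomain k k emb) (Finsupp.single i 1)
                    = mE (⟨i, i, QP.nil i, by simp [QP.length]⟩ : Lam0 Q 0) := by
                  simp only [Finsupp.lmapDomain_apply, Finsupp.mapDomain_single]
                  rfl
                by_cases hij : i = j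
                · rw [if_pos hij, h2, hσ1 0 j]
                  rw [if_pos hij]
                · rw [if_neg hij, map_zero, h2, hσ1 0 j, if_neg hij]
          · show (Finsupp.lmapDomain k k emb) (sW (arA k Q b) w) = σ 0 (arA k Q b) _
            induction w using Finsupp.induction_linear with
            | zero => simp
            | add f g hf hg => rw [map_add, map_add, map_add, map_add, hf, hg]
            | single i c =>
                have h1 : (Finsupp.single i c : Q.V →₀ k) = c • Finsupp.single i 1 := by
                  simp [Finsupp.smul_single]
                rw [h1, map_smul, map_smul, map_smul, map_smul, hsW2]
                have h2 : (Finsupp.lmapDomain k k emb) (Finsupp.single i 1)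
                    = mE (⟨i, i, QP.nil i, by simp [QP.length]⟩ : Lam0 Q 0) := by
                  simp only [Finsupp.lmapDomain_apply, Finsupp.mapDomain_single]
                  rfl
                rw [h2, hσ3 0 b]
                simp
      | mul x y hx hy =>
          simp only [map_mul, Module.End.mul_apply, hx, hy]
      | add x y hx hy =>
          simp only [map_add, LinearMap.add_apply, hx, hy]
  · -- Part 3 : exactness
    intro l
    apply le_antisymm
    · rintro m ⟨m', rfl⟩
      rw [LinearMap.mem_ker]
      apply d_zero_of_Esupp (d (l + 1)) (hd1 (l + 1))
      intro x e he
      exact d_coord_some (d l) (hd1 l) (hd2' l) m' x ⟨e, he⟩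
    · intro m hm
      rw [LinearMap.mem_ker] at hm
      have hms : ∀ (x : Lam0 Q (l + 1)) (e : Q.E) (he : Q.t e = x.i),
          m ⟨x, some ⟨e, he⟩⟩ = 0 := by
        intro x e he
        rw [← d_coord (d (l + 1)) (hd1 (l + 1)) (hd2' (l + 1)) m x e he, hm, Finsupp.zero_apply]
      rw [← Finsupp.sum_single m, Finsupp.sum]
      apply Submodule.sum_mem
      intro idx _
      obtain ⟨y, o⟩ := idx
      rcases o with _ | ⟨f, hf⟩
      · have : (Finsupp.single (⟨y, none⟩ : MIdx Q (l + 1)) (m ⟨y, none⟩))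
            = m ⟨y, none⟩ • mE y := by simp [mE, Finsupp.smul_single]
        rw [this]
        exact Submodule.smul_mem _ _ (mE_mem_range (d l) (hd2' l) y)
      · rw [hms y f hf, Finsupp.single_zero]
        exact Submodule.zero_mem _
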